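/- Let n ≥ 2 be a natural number, let R be a commutative ring that is a ℚ-algebra, and let c : ℕ → R be a function with c(0) = 1. For each natural number i with 0 ≤ i ≤ n define d(i) = Σ_{j=0}^{i} (-1)^j · binom(n-j, i-j) · c(j) · c(1)^{i-j} in R (where binom denotes the usual binomial coefficient of natural numbers). Then for every i with 1 ≤ i ≤ n, the element c(i) lies in the ℚ-subalgebra of R generated by the elements d(1), d(2), …, d(i). -/

import Mathlib

/-- Inductive algebraic heart of Lemma 3.2: in a commutative `ℚ`-algebra `R`,
given `c : ℕ → R` with `c 0 = 1`, setting
`d i = ∑_{j=0}^{i} (-1)^j * binom(n-j, i-j) * c j * (c 1)^(i-j)`,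
each `c i` (for `1 ≤ i ≤ n`) lies in the `ℚ`-subalgebra of `R` generated by
`d 1, …, d i`. -/
theorem stmt2 (n : ℕ) (hn : 2 ≤ n) (R : Type*) [CommRing R] [Algebra ℚ R]
    (c d : ℕ → R) (hc0 : c 0 = 1)
    (hd : ∀ i, i ≤ n →
      d i = ∑ j ∈ Finset.range (i + 1),
        (-1 : R) ^ j * ((n - j).choose (i - j) : R) * c j * c 1 ^ (i - j)) :
    ∀ i, 1 ≤ i → i ≤ n → c i ∈ Algebra.adjoin ℚ (d '' Set.Icc 1 i) := by
  intro i
  induction i using Nat.strong_induction_on with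
  | _ i ih =>
    intro hi1 hin
    set S := Algebra.adjoin ℚ (d '' Set.Icc 1 i) with hS
    have hdmem : ∀ k, 1 ≤ k → k ≤ i → d k ∈ S := fun k h1 h2 =>
      Algebra.subset_adjoin ⟨k, ⟨h1, h2⟩, rfl⟩
    have hn1 : ((n : ℚ) - 1) ≠ 0 := by
      have : (2 : ℚ) ≤ n := by exact_mod_cast hn
      linarith
    have hd1 : d 1 = ((n : R) - 1) * c 1 := by
      rw [hd 1 (by omega)]
      simp [Finset.sum_range_succ, hc0]
      ring
    have hc1 : c 1 = algebraMap ℚ R (((n : ℚ) - 1)⁻¹) * d 1 := by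
      rw [hd1, ← mul_assoc]
      have h2 : ((n : R) - 1) = algebraMap ℚ R ((n : ℚ) - 1) := by simp
      rw [h2, ← map_mul, inv_mul_cancel₀ hn1, map_one, one_mul]
    have hc1S : c 1 ∈ S := by
      rw [hc1]
      exact S.mul_mem (S.algebraMap_mem _) (hdmem 1 le_rfl hi1)
    have hcjS : ∀ j, j < i → c j ∈ S := by
      intro j hj
      rcases Nat.eq_zero_or_pos j with h0 | h1
      · rw [h0, hc0]; exact S.one_mem
      · refine Algebra.adjoin_mono ?_ (ih j hj h1 (by omega))
        exact Set.image_mono (Set.Icc_subset_Icc_right (le_of_lt hj))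
    have hdi := hd i hin
    rw [Finset.sum_range_succ] at hdi
    simp only [Nat.sub_self, Nat.choose_zero_right, Nat.cast_one, pow_zero, mul_one] at hdi
    have hci : c i = (-1 : R) ^ i * (d i - ∑ j ∈ Finset.range i,
        (-1 : R) ^ j * ((n - j).choose (i - j) : R) * c j * c 1 ^ (i - j)) := by
      rw [hdi, add_sub_cancel_left, ← mul_assoc, ← pow_add, ← two_mul, pow_mul,
        neg_one_sq, one_pow, one_mul]
    rw [hci]
    refine S.mul_mem (S.pow_mem (S.neg_mem S.one_mem) i)
      (S.sub_mem (hdmem i hi1 le_rfl) (S.sum_mem fun j hj => ?_))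
    exact S.mul_mem (S.mul_mem (S.mul_mem (S.pow_mem (S.neg_mem S.one_mem) j)
      (S.natCast_mem _)) (hcjS j (Finset.mem_range.mp hj))) (S.pow_mem hc1S _)
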